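/- If A is a canonical n×m binary matrix and i is an index with ζ_1(A) < i ≤ n such that the i-th row has the same number of 1's as the first row (ε_i(A) = ε_1(A)), then the multiplicity of the first row is at least the multiplicity of the i-th row: ζ_1(A) ≥ ζ_i(A). -/

import Mathlib

/-- The value of a row of length `m` read as a binary number (most significant digit first). -/
def rowVal (m : ℕ) (row : Fin m → Bool) : ℕ :=
  ∑ j : Fin m, (row j).toNat * 2 ^ (m - 1 - (j : ℕ))

/-- `r(A)`: the tuple of row values of a binary matrix. -/
def rtup {n m : ℕ} (A : Fin n → Fin m → Bool) : Fin n → ℕ :=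
  fun i => rowVal m (A i)

/-- `c(A)`: the tuple of column values of a binary matrix. -/
def ctup {n m : ℕ} (A : Fin n → Fin m → Bool) : Fin m → ℕ :=
  fun j => rowVal n (fun i => A i j)

/-- `A ∼ B`: `B` is obtained from `A` by permuting rows and columns. -/
def MatEquiv {n m : ℕ} (A B : Fin n → Fin m → Bool) : Prop :=
  ∃ (ρ : Equiv.Perm (Fin n)) (σ : Equiv.Perm (Fin m)), ∀ i j, B i j = A (ρ i) (σ j)

/-- `A` is semi-canonical: both `r(A)` and `c(A)` are weakly increasing. -/
def SemiCanonical {n m : ℕ} (A : Fin n → Fin m → Bool) : Prop :=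
  Monotone (rtup A) ∧ Monotone (ctup A)

/-- `A` is canonical: `r(A)` is the lexicographic minimum over the equivalence class of `A`. -/
def Canonical {n m : ℕ} (A : Fin n → Fin m → Bool) : Prop :=
  ∀ B, MatEquiv A B → toLex (rtup A) ≤ toLex (rtup B)

/-- `ζ_i(A)`: the number of rows of `A` equal to the `i`-th row. -/
def zeta {n m : ℕ} (A : Fin n → Fin m → Bool) (i : Fin n) : ℕ :=
  (Finset.univ.filter fun k : Fin n => A k = A i).card

lemma rowVal_eq_equiv (m : ℕ) (w : Fin m → Bool) :
    rowVal m w = (finFunctionFinEquiv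
      (fun j : Fin m => (⟨(w (Fin.rev j)).toNat, by cases w (Fin.rev j) <;> simp⟩ : Fin 2)) : ℕ) := by
  rw [finFunctionFinEquiv_apply, rowVal,
    ← Equiv.sum_comp Fin.revPerm (fun j => (w j).toNat * 2 ^ (m - 1 - (j : ℕ)))]
  refine Finset.sum_congr rfl fun j _ => ?_
  have hj := j.isLt
  simp only [Fin.revPerm_apply, Fin.val_rev]
  have he : m - 1 - (m - ((j : ℕ) + 1)) = (j : ℕ) := by omega
  rw [he]

lemma rowVal_injective (m : ℕ) : Function.Injective (rowVal m) := by
  intro u v h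
  rw [rowVal_eq_equiv, rowVal_eq_equiv] at h
  have h2 := finFunctionFinEquiv.injective (Fin.val_injective h)
  funext j
  have h3 := congrFun h2 (Fin.rev j)
  simp only [Fin.rev_rev] at h3
  have h4 : (u j).toNat = (v j).toNat := congrArg Fin.val h3
  cases hu : u j <;> cases hv : v j <;> simp_all

lemma canonical_monotone {n m : ℕ} (A : Fin n → Fin m → Bool) (hA : Canonical A) :
    Monotone (rtup A) := by
  intro k l hkl
  by_contra hlt
  push_neg at hlt
  have hk : k ≠ l := by rintro rfl; exact absurd hlt (lt_irrefl _)
  have hklt : k < l := lt_of_le_of_ne hkl hk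
  have hle := hA (fun i j => A (Equiv.swap k l i) j) ⟨Equiv.swap k l, 1, fun i j => rfl⟩
  have hlt2 : toLex (rtup (fun i j => A (Equiv.swap k l i) j)) < toLex (rtup A) := by
    refine ⟨k, fun j hj => ?_, ?_⟩
    · have h1 : Equiv.swap k l j = j :=
        Equiv.swap_apply_of_ne_of_ne (ne_of_lt hj) (ne_of_lt (hj.trans hklt))
      simp [rtup, h1]
    · simpa [rtup, Equiv.swap_apply_left] using hlt
  exact absurd hle hlt2.not_ge

lemma sum_toNat_eq_card {m : ℕ} (u : Fin m → Bool) :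
    (∑ j : Fin m, (u j).toNat) = (Finset.univ.filter fun j => u j = true).card := by
  rw [Finset.card_filter]
  refine Finset.sum_congr rfl fun j _ => ?_
  cases u j <;> simp

theorem canonical_multiplicity {n m : ℕ} (A : Fin (n + 1) → Fin m → Bool)
    (hA : Canonical A) :
    ∀ i : Fin (n + 1), zeta A 0 ≤ (i : ℕ) →
      (∑ j : Fin m, (A i j).toNat) = (∑ j : Fin m, (A 0 j).toNat) →
      zeta A i ≤ zeta A 0 := by
  intro i hi hsum
  by_contra hcon
  push_neg at hcon
  have hmono := canonical_monotone A hA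
  have hinj := rowVal_injective m
  -- rows equal to row 0 are exactly the initial segment of length zeta A 0
  have hdown : ∀ k l : Fin (n + 1), A k = A 0 → l ≤ k → A l = A 0 := by
    intro k l hk hlk
    have h1 : rtup A l ≤ rtup A k := hmono hlk
    have h2 : rtup A 0 ≤ rtup A l := hmono (Fin.zero_le l)
    have h3 : rtup A k = rtup A 0 := congrArg (rowVal m) hk
    have h4 : rtup A l = rtup A 0 := le_antisymm (h3 ▸ h1) h2
    exact hinj h4
  have hrow : ∀ k : Fin (n + 1), A k = A 0 ↔ (k : ℕ) < zeta A 0 := by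
    intro k
    constructor
    · intro hk
      have hsub : Finset.Iic k ⊆ Finset.univ.filter fun l : Fin (n+1) => A l = A 0 := by
        intro l hl
        simp only [Finset.mem_Iic] at hl
        simp [hdown k l hk hl]
      have := Finset.card_le_card hsub
      rw [Fin.card_Iic] at this
      exact this
    · intro hk
      by_contra hne
      have hsub : (Finset.univ.filter fun l : Fin (n+1) => A l = A 0) ⊆ Finset.Iio k := by
        intro l hl
        simp only [Finset.mem_filter] at hl
        simp only [Finset.mem_Iio]
        by_contra hge
        push_neg at hge
        exact hne (hdown l k hl.2 hge)
      have := Finset.card_le_card hsub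
      rw [Fin.card_Iio] at this
      exact absurd hk (not_lt.2 this)
  have hzile : zeta A i ≤ n + 1 := by
    have := Finset.card_filter_le Finset.univ fun k : Fin (n+1) => A k = A i
    simpa [zeta] using this
  -- column permutation matching row i to row 0
  have hcard : Fintype.card {j : Fin m // A 0 j = true} = Fintype.card {j : Fin m // A i j = true} := by
    rw [Fintype.card_subtype, Fintype.card_subtype]
    rw [sum_toNat_eq_card, sum_toNat_eq_card] at hsum
    omega
  let e : {j : Fin m // A 0 j = true} ≃ {j : Fin m // A i j = true} := Fintype.equivOfCardEq hcard
  let σ : Equiv.Perm (Fin m) := e.extendSubtype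
  have hσ : ∀ j, A i (σ j) = A 0 j := by
    intro j
    cases h0 : A 0 j with
    | true => exact e.extendSubtype_mem j h0
    | false =>
      have := e.extendSubtype_not_mem j (by simp [h0])
      simp only [Bool.not_eq_true] at this
      exact this
  -- row permutation bringing the rows equal to row i to the front
  have ez : {k : Fin (n+1) // (k : ℕ) < zeta A i} ≃ Fin (zeta A i) :=
    ⟨fun k => ⟨(k.1 : ℕ), k.2⟩, fun k => ⟨⟨(k : ℕ), lt_of_lt_of_le k.2 hzile⟩, k.2⟩,
     fun k => rfl, fun k => rfl⟩
  have hcard2 : Fintype.card {k : Fin (n+1) // (k : ℕ) < zeta A i}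
      = Fintype.card {k : Fin (n+1) // A k = A i} := by
    rw [Fintype.card_congr ez, Fintype.card_fin, Fintype.card_subtype]
    rfl
  let ρ : Equiv.Perm (Fin (n+1)) := (Fintype.equivOfCardEq hcard2).extendSubtype
  have hρ : ∀ k : Fin (n+1), (k : ℕ) < zeta A i → A (ρ k) = A i := by
    intro k hk
    exact (Fintype.equivOfCardEq hcard2).extendSubtype_mem k hk
  -- the competitor matrix
  set B : Fin (n+1) → Fin m → Bool := fun k j => A (ρ k) (σ j) with hB
  have hle := hA B ⟨ρ, σ, fun _ _ => rfl⟩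
  have hBrow : ∀ k : Fin (n+1), (k : ℕ) < zeta A i → B k = A 0 := by
    intro k hk
    funext j
    rw [hB]
    simp only
    rw [hρ k hk, hσ j]
  have hz0n : zeta A 0 < n + 1 := lt_of_le_of_lt hi i.isLt
  set p : Fin (n+1) := ⟨zeta A 0, hz0n⟩ with hp
  have hlt2 : toLex (rtup B) < toLex (rtup A) := by
    refine ⟨p, fun k hk => ?_, ?_⟩
    · have hk' : (k : ℕ) < zeta A 0 := hk
      have h1 : rtup B k = rtup A 0 :=
        congrArg (rowVal m) (hBrow k (lt_trans hk' hcon))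
      have h2 : A k = A 0 := (hrow k).2 hk'
      have h3 : rtup A k = rtup A 0 := congrArg (rowVal m) h2
      show rtup B k = rtup A k
      rw [h1, h3]
    · have h1 : rtup B p = rtup A 0 := congrArg (rowVal m) (hBrow p hcon)
      have h2 : A p ≠ A 0 := fun h => absurd ((hrow p).1 h) (lt_irrefl _)
      have h3 : rtup A 0 ≤ rtup A p := hmono (Fin.zero_le p)
      have h4 : rtup A p ≠ rtup A 0 := fun h => h2 (hinj h)
      show rtup B p < rtup A p
      rw [h1]
      exact lt_of_le_of_ne h3 (Ne.symm h4)
  exact absurd hle hlt2.not_ge
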